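/- Let p(x,y) be a polynomial in two real variables such that for every y ∈ ℝ the integral over x ∈ ℝ of p(x,y)·|u(x+iy)|² dx equals 0. Then the polynomial q(x,y) := ∂²p/∂x²(x,y) + ∂²p/∂y²(x,y) + 12x²y·p(x,y) + 4·(x³ − 3xy² − β)·∫₀ˣ (∂p/∂y)(t,y) dt also satisfies: for every y ∈ ℝ, the integral over x ∈ ℝ of q(x,y)·|u(x+iy)|² dx equals 0. -/

import Mathlib

open Complex Real ComplexConjugate MeasureTheory

open Filter Topology

lemma aux_tendsto_atTop (c : ℝ) (hc : 0 < c) (N : ℕ) :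
    Tendsto (fun t : ℝ => (1 + t) ^ N * Real.exp (-(t ^ c))) atTop (𝓝 0) := by
  have h1 : Tendsto (fun s : ℝ => s ^ ((N : ℝ)/c) * Real.exp (-s)) atTop (𝓝 0) := by
    have := tendsto_rpow_mul_exp_neg_mul_atTop_nhds_zero ((N : ℝ)/c) 1 one_pos
    simpa using this
  have h2 : Tendsto (fun t : ℝ => t ^ c) atTop atTop := tendsto_rpow_atTop hc
  have h3 : Tendsto (fun t : ℝ => (2:ℝ)^N * ((t ^ c) ^ ((N : ℝ)/c) * Real.exp (-(t ^ c))))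
      atTop (𝓝 0) := by
    have := (h1.comp h2).const_mul ((2:ℝ)^N)
    simpa [Function.comp] using this
  apply squeeze_zero' ?_ ?_ h3
  · filter_upwards [eventually_ge_atTop (0:ℝ)] with t ht
    positivity
  · filter_upwards [eventually_ge_atTop (1:ℝ)] with t ht
    have ht0 : (0:ℝ) ≤ t := by linarith
    have hbase : (1 + t) ^ N ≤ (2*t) ^ N := by
      apply pow_le_pow_left₀ (by linarith) (by linarith)
    have heq : (t ^ c) ^ ((N : ℝ)/c) = t ^ (N : ℕ) := by
      rw [← Real.rpow_natCast t N, ← Real.rpow_mul ht0]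
      congr 1
      field_simp
    rw [heq]
    calc (1 + t) ^ N * Real.exp (-(t ^ c)) ≤ (2*t)^N * Real.exp (-(t ^ c)) := by
          apply mul_le_mul_of_nonneg_right hbase (Real.exp_nonneg _)
      _ = 2^N * (t^N * Real.exp (-(t^c))) := by rw [mul_pow]; ring

lemma aux_decay_fun_eq (c : ℝ) (N : ℕ) :
    (fun x : ℝ => (1 + |x|) ^ N * Real.exp (-(|x| ^ c)))
      = (fun t : ℝ => (1 + t) ^ N * Real.exp (-(t ^ c))) ∘ (fun x => |x|) := rfl

lemma aux_tendsto_both (c : ℝ) (hc : 0 < c) (N : ℕ) :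
    Tendsto (fun x : ℝ => (1 + |x|) ^ N * Real.exp (-(|x| ^ c))) atTop (𝓝 0)
    ∧ Tendsto (fun x : ℝ => (1 + |x|) ^ N * Real.exp (-(|x| ^ c))) atBot (𝓝 0) := by
  rw [aux_decay_fun_eq]
  exact ⟨(aux_tendsto_atTop c hc N).comp tendsto_abs_atTop_atTop,
    (aux_tendsto_atTop c hc N).comp tendsto_abs_atBot_atTop⟩

lemma aux_continuous (c : ℝ) (hc : 0 < c) (N : ℕ) :
    Continuous (fun x : ℝ => (1 + |x|) ^ N * Real.exp (-(|x| ^ c))) := by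
  apply Continuous.mul
  · exact (continuous_const.add (_root_.continuous_abs : Continuous fun x:ℝ => |x|)).pow N
  · apply Real.continuous_exp.comp
    apply Continuous.neg
    have : Continuous fun x : ℝ => |x| := continuous_abs
    apply Continuous.comp (g := fun t : ℝ => t ^ c) ?_ this
    apply continuous_iff_continuousAt.2
    intro x
    exact Real.continuousAt_rpow_const x c (Or.inr hc.le)

lemma aux_integrable (c : ℝ) (hc : 0 < c) (N : ℕ) :
    Integrable (fun x : ℝ => (1 + |x|) ^ N * Real.exp (-(|x| ^ c))) := by
  -- bound by K * (1+x^2)⁻¹ where K bounds (1+|x|)^(N+2) * exp(-(|x|^c))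
  obtain ⟨hT, hB⟩ := aux_tendsto_both c hc (N+2)
  have hcont := aux_continuous c hc (N+2)
  -- get a global bound K for the (N+2) function
  obtain ⟨R₁, hR₁⟩ := (hT.eventually (eventually_le_nhds (by norm_num : (0:ℝ) < 1))).exists_forall_of_atTop
  obtain ⟨R₀, hR₀⟩ := (hB.eventually (eventually_le_nhds (by norm_num : (0:ℝ) < 1))).exists_forall_of_atBot
  set G := fun x : ℝ => (1 + |x|) ^ (N+2) * Real.exp (-(|x| ^ c)) with hG
  have hcpt : ∃ K₀ : ℝ, ∀ x ∈ Set.Icc (min R₀ 0) (max R₁ 0), G x ≤ K₀ := by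
    obtain ⟨K₀, hK₀⟩ := (isCompact_Icc (a := min R₀ 0) (b := max R₁ 0)).exists_bound_of_continuousOn
      hcont.continuousOn
    exact ⟨K₀, fun x hx => (Real.le_norm_self _).trans (hK₀ x hx)⟩
  obtain ⟨K₀, hK₀⟩ := hcpt
  have hbound : ∀ x : ℝ, G x ≤ max K₀ 1 := by
    intro x
    rcases le_or_gt x (max R₁ 0) with hx | hx
    · rcases le_or_gt (min R₀ 0) x with hx' | hx'
      · exact (hK₀ x ⟨hx', hx⟩).trans (le_max_left _ _)
      · exact (hR₀ x (by simp at hx' ⊢; linarith [hx'.1])).trans (le_max_right _ _)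
    · exact (hR₁ x (le_of_lt (lt_of_le_of_lt (le_max_left _ _) hx))).trans (le_max_right _ _)
  apply Integrable.mono' ((integrable_inv_one_add_sq).const_mul (max K₀ 1)) (aux_continuous c hc N).aestronglyMeasurable
  filter_upwards with x
  have h1 : (0:ℝ) < 1 + x^2 := by positivity
  rw [Real.norm_eq_abs, _root_.abs_of_nonneg (by positivity)]
  have key2 : (1 + |x|) ^ N * Real.exp (-(|x| ^ c)) * (1 + x^2) ≤ max K₀ 1 := by
    have h2 : (1 + x^2) ≤ (1+|x|)^2 := by
      have hx2 : x^2 = |x|^2 := (_root_.sq_abs x).symm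
      nlinarith [abs_nonneg x]
    have key : (1 + |x|) ^ N * Real.exp (-(|x| ^ c)) * (1 + x^2) ≤ G x := by
      rw [hG]
      calc (1 + |x|) ^ N * Real.exp (-(|x| ^ c)) * (1 + x^2)
          ≤ (1 + |x|) ^ N * Real.exp (-(|x| ^ c)) * (1+|x|)^2 := by
            apply mul_le_mul_of_nonneg_left h2 (by positivity)
        _ = (1 + |x|) ^ (N+2) * Real.exp (-(|x| ^ c)) := by ring
    exact key.trans (hbound x)
  have h3 : (max K₀ 1) * (1+x^2)⁻¹ = (max K₀ 1) / (1+x^2) := by rw [div_eq_mul_inv]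
  rw [h3, le_div_iff₀ h1]
  exact key2

noncomputable section

def pw {σ : Type*} (S : Finset σ) (a : σ → ℝ) (e f : σ → ℕ) : ℝ → ℝ → ℝ :=
  fun x y => ∑ i ∈ S, a i * x ^ e i * y ^ f i

def PolyBound (r : ℝ → ℝ → ℝ) : Prop :=
  ∀ M : ℝ, ∃ A : ℝ, ∃ N : ℕ, 0 ≤ A ∧ ∀ x y : ℝ, |y| ≤ M → |r x y| ≤ A * (1+|x|)^N

namespace PolyBound

lemma const (c : ℝ) : PolyBound (fun _ _ => c) :=
  fun _ => ⟨|c|, 0, abs_nonneg c, fun _ _ _ => by simp⟩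

lemma X : PolyBound (fun x _ => x) :=
  fun _ => ⟨1, 1, zero_le_one, fun x y _ => by
    simp only [pow_one, one_mul]; linarith [abs_nonneg x]⟩

lemma Y : PolyBound (fun _ y => y) :=
  fun M => ⟨max M 0, 0, le_max_right _ _, fun x y hy => by
    simp only [pow_zero, mul_one]
    exact hy.trans (le_max_left _ _)⟩

lemma add {r s : ℝ → ℝ → ℝ} (hr : PolyBound r) (hs : PolyBound s) :
    PolyBound (fun x y => r x y + s x y) := by
  intro M
  obtain ⟨A, N, hA, hb⟩ := hr M
  obtain ⟨A', N', hA', hb'⟩ := hs M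
  refine ⟨A + A', max N N', by linarith, fun x y hy => ?_⟩
  have h1 : (1:ℝ) ≤ 1 + |x| := by linarith [abs_nonneg x]
  calc |r x y + s x y| ≤ |r x y| + |s x y| := abs_add_le _ _
    _ ≤ A * (1+|x|)^N + A' * (1+|x|)^N' := add_le_add (hb x y hy) (hb' x y hy)
    _ ≤ A * (1+|x|)^(max N N') + A' * (1+|x|)^(max N N') := by
        apply add_le_add
        · exact mul_le_mul_of_nonneg_left (pow_le_pow_right₀ h1 (le_max_left _ _)) hA
        · exact mul_le_mul_of_nonneg_left (pow_le_pow_right₀ h1 (le_max_right _ _)) hA'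
    _ = (A + A') * (1+|x|)^(max N N') := by ring

lemma mul {r s : ℝ → ℝ → ℝ} (hr : PolyBound r) (hs : PolyBound s) :
    PolyBound (fun x y => r x y * s x y) := by
  intro M
  obtain ⟨A, N, hA, hb⟩ := hr M
  obtain ⟨A', N', hA', hb'⟩ := hs M
  refine ⟨A * A', N + N', mul_nonneg hA hA', fun x y hy => ?_⟩
  calc |r x y * s x y| = |r x y| * |s x y| := abs_mul _ _
    _ ≤ (A * (1+|x|)^N) * (A' * (1+|x|)^N') := by
        apply mul_le_mul (hb x y hy) (hb' x y hy) (abs_nonneg _) (by positivity)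
    _ = (A * A') * (1+|x|)^(N+N') := by rw [pow_add]; ring

lemma neg {r : ℝ → ℝ → ℝ} (hr : PolyBound r) : PolyBound (fun x y => -(r x y)) := by
  intro M
  obtain ⟨A, N, hA, hb⟩ := hr M
  exact ⟨A, N, hA, fun x y hy => by rw [abs_neg]; exact hb x y hy⟩

lemma sub {r s : ℝ → ℝ → ℝ} (hr : PolyBound r) (hs : PolyBound s) :
    PolyBound (fun x y => r x y - s x y) := by
  have := hr.add hs.neg
  simpa [sub_eq_add_neg] using this

end PolyBound

lemma polyBound_pw {σ : Type*} (S : Finset σ) (a : σ → ℝ) (e f : σ → ℕ) :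
    PolyBound (pw S a e f) := by
  intro M
  refine ⟨∑ i ∈ S, |a i| * (max 1 M) ^ f i, S.sup e, ?_, fun x y hy => ?_⟩
  · apply Finset.sum_nonneg
    intro i _
    have h1 : (0:ℝ) ≤ max 1 M := le_trans zero_le_one (le_max_left _ _)
    positivity
  · have h1 : (1:ℝ) ≤ 1 + |x| := by linarith [abs_nonneg x]
    calc |pw S a e f x y| ≤ ∑ i ∈ S, |a i * x ^ e i * y ^ f i| := Finset.abs_sum_le_sum_abs _ _
      _ ≤ ∑ i ∈ S, (|a i| * (max 1 M) ^ f i) * (1+|x|)^(S.sup e) := by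
          apply Finset.sum_le_sum
          intro i hi
          rw [abs_mul, abs_mul, _root_.abs_pow, _root_.abs_pow]
          have hx : |x| ^ e i ≤ (1+|x|) ^ (S.sup e) := by
            calc |x| ^ e i ≤ (1+|x|) ^ e i :=
                  pow_le_pow_left₀ (abs_nonneg x) (by linarith) _
              _ ≤ (1+|x|) ^ (S.sup e) := pow_le_pow_right₀ h1 (Finset.le_sup hi)
          have hyb : |y| ^ f i ≤ (max 1 M) ^ f i :=
            pow_le_pow_left₀ (abs_nonneg y) (hy.trans (le_max_right _ _)) _
          calc |a i| * |x| ^ e i * |y| ^ f i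
              ≤ |a i| * (1+|x|)^(S.sup e) * (max 1 M) ^ f i := by
                apply mul_le_mul ?_ hyb (by positivity) (by positivity)
                exact mul_le_mul_of_nonneg_left hx (abs_nonneg _)
            _ = (|a i| * (max 1 M) ^ f i) * (1+|x|)^(S.sup e) := by ring
      _ = (∑ i ∈ S, |a i| * (max 1 M) ^ f i) * (1+|x|)^(S.sup e) := by
          rw [Finset.sum_mul]

lemma pw_continuous_x {σ : Type*} (S : Finset σ) (a : σ → ℝ) (e f : σ → ℕ) (y : ℝ) :
    Continuous (fun x => pw S a e f x y) := by
  apply continuous_finset_sum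
  intro i _
  exact (continuous_const.mul (continuous_pow (e i))).mul continuous_const

lemma pw_hasDerivAt_x {σ : Type*} (S : Finset σ) (a : σ → ℝ) (e f : σ → ℕ) (x y : ℝ) :
    HasDerivAt (fun x => pw S a e f x y)
      (pw S (fun i => a i * e i) (fun i => e i - 1) f x y) x := by
  apply HasDerivAt.fun_sum
  intro i _
  have h := ((hasDerivAt_pow (e i) x).const_mul (a i)).mul_const (y ^ f i)
  refine h.congr_deriv ?_
  push_cast
  ring

lemma pw_hasDerivAt_y {σ : Type*} (S : Finset σ) (a : σ → ℝ) (e f : σ → ℕ) (x y : ℝ) :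
    HasDerivAt (fun y => pw S a e f x y)
      (pw S (fun i => a i * f i) e (fun i => f i - 1) x y) y := by
  apply HasDerivAt.fun_sum
  intro i _
  have h := (hasDerivAt_pow (f i) y).const_mul (a i * x ^ e i)
  refine h.congr_deriv ?_
  push_cast
  ring

lemma pw_integral {σ : Type*} (S : Finset σ) (a : σ → ℝ) (e f : σ → ℕ) (x y : ℝ) :
    ∫ t in (0:ℝ)..x, pw S a e f t y
      = pw S (fun i => a i / (e i + 1)) (fun i => e i + 1) f x y := by
  simp only [pw]
  rw [intervalIntegral.integral_finset_sum]
  · apply Finset.sum_congr rfl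
    intro i _
    have h1 : (fun t : ℝ => a i * t ^ e i * y ^ f i)
        = fun t => (a i * y ^ f i) * t ^ e i := by funext t; ring
    rw [h1, intervalIntegral.integral_const_mul, integral_pow]
    push_cast
    ring
  · intro i _
    exact ((continuous_const.mul (continuous_pow (e i))).mul continuous_const).intervalIntegrable _ _

lemma polyBound_integrable {r : ℝ → ℝ → ℝ} (hr : PolyBound r) (y : ℝ) {θ : ℝ → ℝ}
    {C₁ C₂ : ℝ} (hC₂ : 0 < C₂)
    (hθm : AEStronglyMeasurable θ (volume : Measure ℝ))
    (hθb : ∀ x, |θ x| ≤ C₁ * Real.exp (-(|x| ^ C₂)))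
    (hrc : Continuous fun x => r x y) :
    Integrable (fun x => r x y * θ x) := by
  obtain ⟨A, N, hA, hb⟩ := hr |y|
  apply Integrable.mono' ((aux_integrable C₂ hC₂ N).const_mul (A * C₁))
    (hrc.aestronglyMeasurable.mul hθm)
  filter_upwards with x
  simp only [Pi.mul_apply, Real.norm_eq_abs, abs_mul]
  calc |r x y| * |θ x| ≤ (A * (1+|x|)^N) * (C₁ * Real.exp (-(|x| ^ C₂))) := by
        apply mul_le_mul (hb x y le_rfl) (hθb x) (abs_nonneg _) (by positivity)
    _ = A * C₁ * ((1+|x|)^N * Real.exp (-(|x| ^ C₂))) := by ring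

lemma polyBound_tendsto {r : ℝ → ℝ → ℝ} (hr : PolyBound r) (y : ℝ) {θ : ℝ → ℝ}
    {C₁ C₂ : ℝ} (hC₂ : 0 < C₂)
    (hθb : ∀ x, |θ x| ≤ C₁ * Real.exp (-(|x| ^ C₂))) :
    Tendsto (fun x => r x y * θ x) atTop (𝓝 0)
    ∧ Tendsto (fun x => r x y * θ x) atBot (𝓝 0) := by
  obtain ⟨A, N, hA, hb⟩ := hr |y|
  obtain ⟨hT, hB⟩ := aux_tendsto_both C₂ hC₂ N
  have key : ∀ x : ℝ, ‖r x y * θ x‖ ≤ A * C₁ * ((1+|x|)^N * Real.exp (-(|x| ^ C₂))) := by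
    intro x
    rw [Real.norm_eq_abs, abs_mul]
    calc |r x y| * |θ x| ≤ (A * (1+|x|)^N) * (C₁ * Real.exp (-(|x| ^ C₂))) := by
          apply mul_le_mul (hb x y le_rfl) (hθb x) (abs_nonneg _) (by positivity)
      _ = A * C₁ * ((1+|x|)^N * Real.exp (-(|x| ^ C₂))) := by ring
  constructor
  · exact squeeze_zero_norm key (by simpa using hT.const_mul (A * C₁))
  · exact squeeze_zero_norm key (by simpa using hB.const_mul (A * C₁))

lemma integral_deriv_eq_zero (φ φ' : ℝ → ℝ) (hd : ∀ x, HasDerivAt φ (φ' x) x)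
    (hi : Integrable φ') (ht : Tendsto φ atTop (𝓝 0)) (hb : Tendsto φ atBot (𝓝 0)) :
    ∫ x : ℝ, φ' x = 0 := by
  rw [← intervalIntegral.integral_Iic_add_Ioi (b := (0:ℝ)) hi.integrableOn hi.integrableOn]
  rw [integral_Iic_of_hasDerivAt_of_tendsto' (fun x _ => hd x) hi.integrableOn hb,
    integral_Ioi_of_hasDerivAt_of_tendsto' (fun x _ => hd x) hi.integrableOn ht]
  ring

section ComplexLayer

variable {lam : ℂ} {u : ℂ → ℂ}

def vv (u : ℂ → ℂ) (x y : ℝ) : ℂ := u (x + y*Complex.I)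
def ww (u : ℂ → ℂ) (x y : ℝ) : ℂ := deriv u (x + y*Complex.I)
def hh (u : ℂ → ℂ) (x y : ℝ) : ℝ := Complex.normSq (vv u x y)
def gg (u : ℂ → ℂ) (x y : ℝ) : ℝ := (ww u x y * conj (vv u x y)).im
def kk (u : ℂ → ℂ) (x y : ℝ) : ℝ := Complex.normSq (ww u x y)
def hx (u : ℂ → ℂ) (x y : ℝ) : ℝ := 2 * (ww u x y * conj (vv u x y)).re

lemma HasDerivAt.creal {f : ℝ → ℂ} {f' : ℂ} {t : ℝ} (hf : HasDerivAt f f' t) :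
    HasDerivAt (fun t => (f t).re) f'.re t :=
  Complex.reCLM.hasFDerivAt.comp_hasDerivAt t hf

lemma HasDerivAt.cimag {f : ℝ → ℂ} {f' : ℂ} {t : ℝ} (hf : HasDerivAt f f' t) :
    HasDerivAt (fun t => (f t).im) f'.im t :=
  Complex.imCLM.hasFDerivAt.comp_hasDerivAt t hf

lemma HasDerivAt.cconj {f : ℝ → ℂ} {f' : ℂ} {t : ℝ} (hf : HasDerivAt f f' t) :
    HasDerivAt (fun t => conj (f t)) (conj f') t := by
  simpa only [starRingEnd_apply] using hf.star

lemma deriv2 (hu_entire : Differentiable ℂ u)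
    (hode : ∀ w : ℂ, iteratedDeriv 2 u w = (Complex.I * w ^ 3 - lam) * u w) (z : ℂ) :
    HasDerivAt (deriv u) ((Complex.I * z^3 - lam) * u z) z := by
  have h1 : AnalyticOnNhd ℂ u Set.univ := hu_entire.differentiableOn.analyticOnNhd isOpen_univ
  have h3 : Differentiable ℂ (deriv u) := fun z => (h1.deriv z (Set.mem_univ z)).differentiableAt
  have h4 := (h3 z).hasDerivAt
  have h5 : deriv (deriv u) z = (Complex.I * z^3 - lam) * u z := by
    rw [← hode z, iteratedDeriv_succ, iteratedDeriv_one]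
  rwa [h5] at h4

lemma hasDerivAt_vv_x (hu_entire : Differentiable ℂ u) (x y : ℝ) :
    HasDerivAt (fun x : ℝ => vv u x y) (ww u x y) x := by
  have h0 : HasDerivAt u (deriv u ((x:ℂ) + y*Complex.I)) ((x:ℂ) + y*Complex.I) :=
    (hu_entire _).hasDerivAt
  have hin : HasDerivAt (fun z : ℂ => z + (y:ℂ)*Complex.I) 1 (x:ℂ) := by
    simpa using (hasDerivAt_id (x:ℂ)).add_const ((y:ℂ)*Complex.I)
  have := (h0.comp (x:ℂ) hin).comp_ofReal
  simpa [vv, ww] using this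

lemma hasDerivAt_vv_y (hu_entire : Differentiable ℂ u) (x y : ℝ) :
    HasDerivAt (fun y : ℝ => vv u x y) (Complex.I * ww u x y) y := by
  have h0 : HasDerivAt u (deriv u ((x:ℂ) + y*Complex.I)) ((x:ℂ) + y*Complex.I) :=
    (hu_entire _).hasDerivAt
  have hin : HasDerivAt (fun z : ℂ => (x:ℂ) + z*Complex.I) Complex.I (y:ℂ) := by
    simpa using ((hasDerivAt_id ((y:ℂ))).mul_const Complex.I).const_add (x:ℂ)
  have := (h0.comp ((y:ℂ)) hin).comp_ofReal
  simp only [vv, ww]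
  convert this using 1
  · funext t; simp only [Function.comp_apply]
  ring

lemma hasDerivAt_ww_x (hu_entire : Differentiable ℂ u)
    (hode : ∀ w : ℂ, iteratedDeriv 2 u w = (Complex.I * w ^ 3 - lam) * u w) (x y : ℝ) :
    HasDerivAt (fun x : ℝ => ww u x y)
      ((Complex.I * ((x:ℂ) + y*Complex.I)^3 - lam) * vv u x y) x := by
  have h0 := deriv2 hu_entire hode ((x:ℂ) + y*Complex.I)
  have hin : HasDerivAt (fun z : ℂ => z + (y:ℂ)*Complex.I) 1 (x:ℂ) := by
    simpa using (hasDerivAt_id (x:ℂ)).add_const ((y:ℂ)*Complex.I)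
  have := (h0.comp (x:ℂ) hin).comp_ofReal
  simpa [vv, ww] using this

lemma hasDerivAt_ww_y (hu_entire : Differentiable ℂ u)
    (hode : ∀ w : ℂ, iteratedDeriv 2 u w = (Complex.I * w ^ 3 - lam) * u w) (x y : ℝ) :
    HasDerivAt (fun y : ℝ => ww u x y)
      (Complex.I * ((Complex.I * ((x:ℂ) + y*Complex.I)^3 - lam) * vv u x y)) y := by
  have h0 := deriv2 hu_entire hode ((x:ℂ) + y*Complex.I)
  have hin : HasDerivAt (fun z : ℂ => (x:ℂ) + z*Complex.I) Complex.I (y:ℂ) := by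
    simpa using ((hasDerivAt_id ((y:ℂ))).mul_const Complex.I).const_add (x:ℂ)
  have := (h0.comp ((y:ℂ)) hin).comp_ofReal
  simp only [vv, ww]
  convert this using 1
  · funext t; simp only [Function.comp_apply]
  ring

end ComplexLayer

section RealLayer

variable {lam : ℂ} {u : ℂ → ℂ}

lemma hh_eq (u : ℂ → ℂ) (x y : ℝ) : hh u x y = (vv u x y * conj (vv u x y)).re := by
  rw [Complex.mul_conj]; simp [hh]

attribute [local simp] Complex.mul_im Complex.mul_re Complex.add_im Complex.add_re
  Complex.sub_re Complex.sub_im Complex.I_re Complex.I_im Complex.ofReal_re Complex.ofReal_im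
  Complex.conj_re Complex.conj_im Complex.normSq_apply pow_succ pow_zero one_mul

lemma hasDerivAt_hh_x (hu_entire : Differentiable ℂ u) (x y : ℝ) :
    HasDerivAt (fun x => hh u x y) (hx u x y) x := by
  have hv := hasDerivAt_vv_x hu_entire x y
  have h := (hv.mul hv.cconj).creal
  have heq : (fun x => hh u x y) = (fun x => (vv u x y * conj (vv u x y)).re) :=
    funext fun x => hh_eq u x y
  simp only [Pi.mul_apply] at h
  rw [heq]
  convert h using 1
  simp [hx]; ring

lemma hasDerivAt_hh_y (hu_entire : Differentiable ℂ u) (x y : ℝ) :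
    HasDerivAt (fun y => hh u x y) (-2 * gg u x y) y := by
  have hv := hasDerivAt_vv_y hu_entire x y
  have h := (hv.mul hv.cconj).creal
  have heq : (fun y => hh u x y) = (fun y => (vv u x y * conj (vv u x y)).re) :=
    funext fun y => hh_eq u x y
  simp only [Pi.mul_apply] at h
  rw [heq]
  convert h using 1
  simp [gg]; ring

lemma hasDerivAt_gg_x (hu_entire : Differentiable ℂ u)
    (hode : ∀ w : ℂ, iteratedDeriv 2 u w = (Complex.I * w ^ 3 - lam) * u w) (x y : ℝ) :
    HasDerivAt (fun x => gg u x y) ((x^3 - 3*x*y^2 - lam.im) * hh u x y) x := by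
  have hw := hasDerivAt_ww_x hu_entire hode x y
  have hv := hasDerivAt_vv_x hu_entire x y
  have h := (hw.mul hv.cconj).cimag
  have heq : (fun x => gg u x y) = (fun x => (ww u x y * conj (vv u x y)).im) := rfl
  simp only [Pi.mul_apply] at h
  rw [heq]
  convert h using 1
  simp [hh]; ring

lemma hasDerivAt_gg_y (hu_entire : Differentiable ℂ u)
    (hode : ∀ w : ℂ, iteratedDeriv 2 u w = (Complex.I * w ^ 3 - lam) * u w) (x y : ℝ) :
    HasDerivAt (fun y => gg u x y)
      ((y^3 - 3*x^2*y - lam.re) * hh u x y - kk u x y) y := by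
  have hw := hasDerivAt_ww_y hu_entire hode x y
  have hv := hasDerivAt_vv_y hu_entire x y
  have h := (hw.mul hv.cconj).cimag
  have heq : (fun y => gg u x y) = (fun y => (ww u x y * conj (vv u x y)).im) := rfl
  simp only [Pi.mul_apply] at h
  rw [heq]
  convert h using 1
  simp [hh, kk]; ring

lemma hasDerivAt_hx_x (hu_entire : Differentiable ℂ u)
    (hode : ∀ w : ℂ, iteratedDeriv 2 u w = (Complex.I * w ^ 3 - lam) * u w) (x y : ℝ) :
    HasDerivAt (fun x => hx u x y)
      (2*(y^3 - 3*x^2*y - lam.re) * hh u x y + 2 * kk u x y) x := by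
  have hw := hasDerivAt_ww_x hu_entire hode x y
  have hv := hasDerivAt_vv_x hu_entire x y
  have h := ((hw.mul hv.cconj).creal.const_mul (2:ℝ))
  have heq : (fun x => hx u x y) = (fun x => 2 * (ww u x y * conj (vv u x y)).re) := rfl
  simp only [Pi.mul_apply] at h
  rw [heq]
  refine h.congr_deriv ?_
  simp [hh, kk]; ring

end RealLayer

section ContDecay

variable {lam : ℂ} {u : ℂ → ℂ}

lemma cont_vv (hu_entire : Differentiable ℂ u) (y : ℝ) :
    Continuous fun x => vv u x y :=
  continuous_iff_continuousAt.2 fun x => (hasDerivAt_vv_x hu_entire x y).continuousAt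

lemma cont_ww (hu_entire : Differentiable ℂ u)
    (hode : ∀ w : ℂ, iteratedDeriv 2 u w = (Complex.I * w ^ 3 - lam) * u w) (y : ℝ) :
    Continuous fun x => ww u x y :=
  continuous_iff_continuousAt.2 fun x => (hasDerivAt_ww_x hu_entire hode x y).continuousAt

lemma cont_hh (hu_entire : Differentiable ℂ u) (y : ℝ) :
    Continuous fun x => hh u x y :=
  continuous_iff_continuousAt.2 fun x => (hasDerivAt_hh_x hu_entire x y).continuousAt

lemma cont_gg (hu_entire : Differentiable ℂ u)
    (hode : ∀ w : ℂ, iteratedDeriv 2 u w = (Complex.I * w ^ 3 - lam) * u w) (y : ℝ) :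
    Continuous fun x => gg u x y :=
  continuous_iff_continuousAt.2 fun x => (hasDerivAt_gg_x hu_entire hode x y).continuousAt

lemma cont_kk (hu_entire : Differentiable ℂ u)
    (hode : ∀ w : ℂ, iteratedDeriv 2 u w = (Complex.I * w ^ 3 - lam) * u w) (y : ℝ) :
    Continuous fun x => kk u x y :=
  Complex.continuous_normSq.comp (cont_ww hu_entire hode y)

lemma cont_hx (hu_entire : Differentiable ℂ u)
    (hode : ∀ w : ℂ, iteratedDeriv 2 u w = (Complex.I * w ^ 3 - lam) * u w) (y : ℝ) :
    Continuous fun x => hx u x y :=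
  continuous_iff_continuousAt.2 fun x => (hasDerivAt_hx_x hu_entire hode x y).continuousAt

lemma decay_bounds
    (hdecay : ∀ M : ℝ, 0 < M → ∃ C₁ > (0 : ℝ), ∃ C₂ > (0 : ℝ), ∀ x y : ℝ, |y| ≤ M →
      ‖u (x + y * Complex.I)‖ + ‖deriv u (x + y * Complex.I)‖
        ≤ C₁ * Real.exp (-(|x| ^ C₂)))
    (M : ℝ) (hM : 0 < M) :
    ∃ C > (0:ℝ), ∃ c > (0:ℝ), ∀ x y : ℝ, |y| ≤ M →
      |hh u x y| ≤ C * Real.exp (-(|x|^c)) ∧ |gg u x y| ≤ C * Real.exp (-(|x|^c))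
      ∧ |kk u x y| ≤ C * Real.exp (-(|x|^c)) ∧ |hx u x y| ≤ C * Real.exp (-(|x|^c)) := by
  obtain ⟨C₁, hC₁, C₂, hC₂, hb⟩ := hdecay M hM
  refine ⟨C₁^2, by positivity, C₂, hC₂, fun x y hy => ?_⟩
  have hb' := hb x y hy
  set a := ‖vv u x y‖ with ha
  set b := ‖ww u x y‖ with hbb
  have hab : a + b ≤ C₁ * Real.exp (-(|x| ^ C₂)) := hb'
  have ha0 : 0 ≤ a := norm_nonneg _
  have hb0 : 0 ≤ b := norm_nonneg _
  have hE1 : Real.exp (-(|x| ^ C₂)) ≤ 1 := by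
    rw [Real.exp_le_one_iff]
    have : (0:ℝ) ≤ |x| ^ C₂ := Real.rpow_nonneg (abs_nonneg x) C₂
    linarith
  have hE0 : 0 ≤ Real.exp (-(|x| ^ C₂)) := Real.exp_nonneg _
  have key : (a + b)^2 ≤ C₁^2 * Real.exp (-(|x| ^ C₂)) := by
    set E := Real.exp (-(|x| ^ C₂)) with hEdef
    have h5 : (a+b)^2 ≤ (C₁ * E)^2 := by nlinarith
    have h6 : C₁^2 * E * E ≤ C₁^2 * E * 1 :=
      mul_le_mul_of_nonneg_left hE1 (by positivity)
    nlinarith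
  have h1 : |hh u x y| ≤ (a+b)^2 := by
    rw [hh, _root_.abs_of_nonneg (Complex.normSq_nonneg _), Complex.normSq_eq_norm_sq]
    nlinarith
  have h2 : |gg u x y| ≤ (a+b)^2 := by
    have := Complex.abs_im_le_norm (ww u x y * conj (vv u x y))
    rw [norm_mul, Complex.norm_conj] at this
    calc |gg u x y| ≤ b * a := this
      _ ≤ (a+b)^2 := by nlinarith
  have h3 : |kk u x y| ≤ (a+b)^2 := by
    rw [kk, _root_.abs_of_nonneg (Complex.normSq_nonneg _), Complex.normSq_eq_norm_sq]
    nlinarith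
  have h4 : |hx u x y| ≤ (a+b)^2 := by
    have him := Complex.abs_re_le_norm (ww u x y * conj (vv u x y))
    rw [norm_mul, Complex.norm_conj] at him
    rw [hx, abs_mul]
    calc |(2:ℝ)| * |(ww u x y * conj (vv u x y)).re| ≤ 2 * (b * a) := by
          rw [_root_.abs_two]
          exact mul_le_mul_of_nonneg_left him (by norm_num)
      _ ≤ (a+b)^2 := by nlinarith
  exact ⟨h1.trans key, h2.trans key, h3.trans key, h4.trans key⟩

end ContDecay

lemma PolyBound.congr {r s : ℝ → ℝ → ℝ} (h : PolyBound r) (heq : ∀ x y, r x y = s x y) :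
    PolyBound s := by
  intro M
  obtain ⟨A, N, hA, hb⟩ := h M
  exact ⟨A, N, hA, fun x y hy => by rw [← heq]; exact hb x y hy⟩

lemma combo_bound {r₁ r₂ r₃ r₄ θ₁ θ₂ θ₃ θ₄ : ℝ → ℝ → ℝ}
    (h₁ : PolyBound r₁) (h₂ : PolyBound r₂) (h₃ : PolyBound r₃) (h₄ : PolyBound r₄)
    (M C c : ℝ)
    (hθ₁ : ∀ x y : ℝ, |y| ≤ M → |θ₁ x y| ≤ C * Real.exp (-(|x|^c)))
    (hθ₂ : ∀ x y : ℝ, |y| ≤ M → |θ₂ x y| ≤ C * Real.exp (-(|x|^c)))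
    (hθ₃ : ∀ x y : ℝ, |y| ≤ M → |θ₃ x y| ≤ C * Real.exp (-(|x|^c)))
    (hθ₄ : ∀ x y : ℝ, |y| ≤ M → |θ₄ x y| ≤ C * Real.exp (-(|x|^c))) :
    ∃ A : ℝ, ∃ N : ℕ, True ∧ ∀ x y : ℝ, |y| ≤ M →
      |r₁ x y * θ₁ x y + r₂ x y * θ₂ x y + r₃ x y * θ₃ x y + r₄ x y * θ₄ x y|
        ≤ A * ((1+|x|)^N * Real.exp (-(|x|^c))) := by
  obtain ⟨A₁, N₁, hA₁, hb₁⟩ := h₁ M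
  obtain ⟨A₂, N₂, hA₂, hb₂⟩ := h₂ M
  obtain ⟨A₃, N₃, hA₃, hb₃⟩ := h₃ M
  obtain ⟨A₄, N₄, hA₄, hb₄⟩ := h₄ M
  set N := max (max N₁ N₂) (max N₃ N₄) with hN
  refine ⟨(A₁ + A₂ + A₃ + A₄) * C, N, ?_, fun x y hy => ?_⟩
  · exact trivial
  have hC : 0 ≤ C := by
    nlinarith [Real.exp_pos (-(|(0:ℝ)|^c)), (abs_nonneg (θ₁ 0 y)).trans (hθ₁ 0 y hy)]
  have h1x : (1:ℝ) ≤ 1 + |x| := by linarith [abs_nonneg x]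
  have hE0 : 0 ≤ Real.exp (-(|x|^c)) := Real.exp_nonneg _
  have key : ∀ (A' : ℝ) (N' : ℕ) (r θ : ℝ → ℝ → ℝ), 0 ≤ A' → N' ≤ N →
      (|r x y| ≤ A' * (1+|x|)^N') → (|θ x y| ≤ C * Real.exp (-(|x|^c))) →
      |r x y * θ x y| ≤ A' * C * ((1+|x|)^N * Real.exp (-(|x|^c))) := by
    intro A' N' r θ hA' hN' hr hθ
    rw [abs_mul]
    calc |r x y| * |θ x y| ≤ (A' * (1+|x|)^N') * (C * Real.exp (-(|x|^c))) :=
          mul_le_mul hr hθ (abs_nonneg _) (by positivity)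
      _ ≤ (A' * (1+|x|)^N) * (C * Real.exp (-(|x|^c))) := by
          apply mul_le_mul_of_nonneg_right _ (by positivity)
          exact mul_le_mul_of_nonneg_left (pow_le_pow_right₀ h1x hN') hA'
      _ = A' * C * ((1+|x|)^N * Real.exp (-(|x|^c))) := by ring
  calc |r₁ x y * θ₁ x y + r₂ x y * θ₂ x y + r₃ x y * θ₃ x y + r₄ x y * θ₄ x y|
      ≤ |r₁ x y * θ₁ x y| + |r₂ x y * θ₂ x y| + |r₃ x y * θ₃ x y| + |r₄ x y * θ₄ x y| := by
        calc _ ≤ |r₁ x y * θ₁ x y + r₂ x y * θ₂ x y + r₃ x y * θ₃ x y| + |r₄ x y * θ₄ x y| :=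
              abs_add_le _ _
          _ ≤ |r₁ x y * θ₁ x y + r₂ x y * θ₂ x y| + |r₃ x y * θ₃ x y| + |r₄ x y * θ₄ x y| := by
              gcongr; exact abs_add_le _ _
          _ ≤ |r₁ x y * θ₁ x y| + |r₂ x y * θ₂ x y| + |r₃ x y * θ₃ x y| + |r₄ x y * θ₄ x y| := by
              gcongr; exact abs_add_le _ _
    _ ≤ A₁ * C * ((1+|x|)^N * Real.exp (-(|x|^c)))
        + A₂ * C * ((1+|x|)^N * Real.exp (-(|x|^c)))
        + A₃ * C * ((1+|x|)^N * Real.exp (-(|x|^c)))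
        + A₄ * C * ((1+|x|)^N * Real.exp (-(|x|^c))) := by
        apply add_le_add (add_le_add (add_le_add ?_ ?_) ?_) ?_
        · exact key A₁ N₁ r₁ θ₁ hA₁ (le_max_of_le_left (le_max_left _ _)) (hb₁ x y hy) (hθ₁ x y hy)
        · exact key A₂ N₂ r₂ θ₂ hA₂ (le_max_of_le_left (le_max_right _ _)) (hb₂ x y hy) (hθ₂ x y hy)
        · exact key A₃ N₃ r₃ θ₃ hA₃ (le_max_of_le_right (le_max_left _ _)) (hb₃ x y hy) (hθ₃ x y hy)
        · exact key A₄ N₄ r₄ θ₄ hA₄ (le_max_of_le_right (le_max_right _ _)) (hb₄ x y hy) (hθ₄ x y hy)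
    _ = (A₁ + A₂ + A₃ + A₄) * C * ((1+|x|)^N * Real.exp (-(|x|^c))) := by ring

lemma polyBound_cubic1 (α : ℝ) : PolyBound (fun x y => y^3 - 3*x^2*y - α) := by
  intro M
  refine ⟨|M|^3 + 3*|M| + |α|, 2, by positivity, fun x y hy => ?_⟩
  have hyM : |y| ≤ |M| := hy.trans (le_abs_self M)
  have hx0 : (0:ℝ) ≤ |x| := abs_nonneg x
  have hy0 : (0:ℝ) ≤ |y| := abs_nonneg y
  have h1 : |y^3 - 3*x^2*y - α| ≤ |y|^3 + 3*x^2 * |y| + |α| := by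
    calc |y^3 - 3*x^2*y - α| ≤ |y^3 - 3*x^2*y| + |α| := abs_sub _ _
      _ ≤ |y^3| + |3*x^2*y| + |α| := by gcongr; exact abs_sub _ _
      _ = |y|^3 + 3*x^2 * |y| + |α| := by
          rw [_root_.abs_pow, abs_mul, abs_mul, _root_.abs_of_nonneg (by positivity : (0:ℝ) ≤ 3),
            _root_.abs_of_nonneg (sq_nonneg x)]
  have h2 : x^2 ≤ (1+|x|)^2 := by nlinarith [_root_.sq_abs x]
  have h3 : (1:ℝ) ≤ (1+|x|)^2 := by nlinarith
  have e1 : |y|^3 ≤ |M|^3 := pow_le_pow_left₀ hy0 hyM 3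
  have e3 : |M|^3 ≤ |M|^3 * (1+|x|)^2 := le_mul_of_one_le_right (by positivity) h3
  have e4 : |α| ≤ |α| * (1+|x|)^2 := le_mul_of_one_le_right (abs_nonneg α) h3
  have e5 : x^2 * |y| ≤ (1+|x|)^2 * |M| := mul_le_mul h2 hyM hy0 (by positivity)
  calc |y^3 - 3*x^2*y - α| ≤ |y|^3 + 3*x^2 * |y| + |α| := h1
    _ ≤ (|M|^3 + 3 * |M| + |α|) * (1+|x|)^2 := by nlinarith [e1, e3, e4, e5]

lemma polyBound_cubic2 (β : ℝ) : PolyBound (fun x y => x^3 - 3*x*y^2 - β) := by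
  intro M
  refine ⟨1 + 3*|M|^2 + |β|, 3, by positivity, fun x y hy => ?_⟩
  have hyM : |y| ≤ |M| := hy.trans (le_abs_self M)
  have hx0 : (0:ℝ) ≤ |x| := abs_nonneg x
  have hy0 : (0:ℝ) ≤ |y| := abs_nonneg y
  have h1 : |x^3 - 3*x*y^2 - β| ≤ |x|^3 + 3 * |x| * |y|^2 + |β| := by
    calc |x^3 - 3*x*y^2 - β| ≤ |x^3 - 3*x*y^2| + |β| := abs_sub _ _
      _ ≤ |x^3| + |3*x*y^2| + |β| := by gcongr; exact abs_sub _ _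
      _ = |x|^3 + 3 * |x| * |y|^2 + |β| := by
          rw [_root_.abs_pow, abs_mul, abs_mul, _root_.abs_of_nonneg (by positivity : (0:ℝ) ≤ 3),
            _root_.abs_pow]
  have h2 : |x|^3 ≤ (1+|x|)^3 := pow_le_pow_left₀ hx0 (by linarith) 3
  have h3 : (1:ℝ) ≤ (1+|x|)^3 := one_le_pow₀ (by linarith)
  have h4 : |x| ≤ (1+|x|)^3 := by nlinarith
  have h5 : |y|^2 ≤ |M|^2 := pow_le_pow_left₀ hy0 hyM 2
  have e2 : |x| * |y|^2 ≤ (1+|x|)^3 * |M|^2 := mul_le_mul h4 h5 (by positivity) (by positivity)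
  have e3 : |β| ≤ |β| * (1+|x|)^3 := le_mul_of_one_le_right (abs_nonneg β) h3
  calc |x^3 - 3*x*y^2 - β| ≤ |x|^3 + 3 * |x| * |y|^2 + |β| := h1
    _ ≤ (1 + 3 * |M|^2 + |β|) * (1+|x|)^3 := by nlinarith [h2, e2, e3]

section Wrappers

variable {lam : ℂ} {u : ℂ → ℂ}

variable (hdecay : ∀ M : ℝ, 0 < M → ∃ C₁ > (0 : ℝ), ∃ C₂ > (0 : ℝ), ∀ x y : ℝ, |y| ≤ M →
      ‖u (x + y * Complex.I)‖ + ‖deriv u (x + y * Complex.I)‖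
        ≤ C₁ * Real.exp (-(|x| ^ C₂)))

include hdecay

lemma integrable_poly_hh {r : ℝ → ℝ → ℝ} (hr : PolyBound r) (y : ℝ)
    (hrc : Continuous fun x => r x y) (hu_entire : Differentiable ℂ u) :
    Integrable (fun x => r x y * hh u x y) := by
  obtain ⟨C, hC, c, hc, hbd⟩ := decay_bounds hdecay (|y|+1) (by positivity)
  exact polyBound_integrable hr y hc (cont_hh hu_entire y).aestronglyMeasurable
    (fun x => (hbd x y (by linarith [abs_nonneg y])).1) hrc

lemma integrable_poly_gg {r : ℝ → ℝ → ℝ} (hr : PolyBound r) (y : ℝ)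
    (hrc : Continuous fun x => r x y) (hu_entire : Differentiable ℂ u)
    (hode : ∀ w : ℂ, iteratedDeriv 2 u w = (Complex.I * w ^ 3 - lam) * u w) :
    Integrable (fun x => r x y * gg u x y) := by
  obtain ⟨C, hC, c, hc, hbd⟩ := decay_bounds hdecay (|y|+1) (by positivity)
  exact polyBound_integrable hr y hc (cont_gg hu_entire hode y).aestronglyMeasurable
    (fun x => (hbd x y (by linarith [abs_nonneg y])).2.1) hrc

lemma integrable_poly_kk {r : ℝ → ℝ → ℝ} (hr : PolyBound r) (y : ℝ)
    (hrc : Continuous fun x => r x y) (hu_entire : Differentiable ℂ u)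
    (hode : ∀ w : ℂ, iteratedDeriv 2 u w = (Complex.I * w ^ 3 - lam) * u w) :
    Integrable (fun x => r x y * kk u x y) := by
  obtain ⟨C, hC, c, hc, hbd⟩ := decay_bounds hdecay (|y|+1) (by positivity)
  exact polyBound_integrable hr y hc (cont_kk hu_entire hode y).aestronglyMeasurable
    (fun x => (hbd x y (by linarith [abs_nonneg y])).2.2.1) hrc

lemma integrable_poly_hx {r : ℝ → ℝ → ℝ} (hr : PolyBound r) (y : ℝ)
    (hrc : Continuous fun x => r x y) (hu_entire : Differentiable ℂ u)
    (hode : ∀ w : ℂ, iteratedDeriv 2 u w = (Complex.I * w ^ 3 - lam) * u w) :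
    Integrable (fun x => r x y * hx u x y) := by
  obtain ⟨C, hC, c, hc, hbd⟩ := decay_bounds hdecay (|y|+1) (by positivity)
  exact polyBound_integrable hr y hc (cont_hx hu_entire hode y).aestronglyMeasurable
    (fun x => (hbd x y (by linarith [abs_nonneg y])).2.2.2) hrc

lemma tendsto_poly_hh {r : ℝ → ℝ → ℝ} (hr : PolyBound r) (y : ℝ) :
    Tendsto (fun x => r x y * hh u x y) atTop (𝓝 0)
    ∧ Tendsto (fun x => r x y * hh u x y) atBot (𝓝 0) := by
  obtain ⟨C, hC, c, hc, hbd⟩ := decay_bounds hdecay (|y|+1) (by positivity)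
  exact polyBound_tendsto hr y hc (fun x => (hbd x y (by linarith [abs_nonneg y])).1)

lemma tendsto_poly_gg {r : ℝ → ℝ → ℝ} (hr : PolyBound r) (y : ℝ) :
    Tendsto (fun x => r x y * gg u x y) atTop (𝓝 0)
    ∧ Tendsto (fun x => r x y * gg u x y) atBot (𝓝 0) := by
  obtain ⟨C, hC, c, hc, hbd⟩ := decay_bounds hdecay (|y|+1) (by positivity)
  exact polyBound_tendsto hr y hc (fun x => (hbd x y (by linarith [abs_nonneg y])).2.1)

lemma tendsto_poly_hx {r : ℝ → ℝ → ℝ} (hr : PolyBound r) (y : ℝ) :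
    Tendsto (fun x => r x y * hx u x y) atTop (𝓝 0)
    ∧ Tendsto (fun x => r x y * hx u x y) atBot (𝓝 0) := by
  obtain ⟨C, hC, c, hc, hbd⟩ := decay_bounds hdecay (|y|+1) (by positivity)
  exact polyBound_tendsto hr y hc (fun x => (hbd x y (by linarith [abs_nonneg y])).2.2.2)

end Wrappers

lemma pw_hasDerivAt_antideriv {σ : Type*} (S : Finset σ) (a : σ → ℝ) (e f : σ → ℕ) (x y : ℝ) :
    HasDerivAt (fun x => pw S (fun i => a i / ((e i : ℝ) + 1)) (fun i => e i + 1) f x y)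
      (pw S a e f x y) x := by
  have t := pw_hasDerivAt_x S (fun i => a i / ((e i : ℝ) + 1)) (fun i => e i + 1) f x y
  convert t using 1
  simp only [pw]
  apply Finset.sum_congr rfl
  intro i _
  have h : ((e i : ℝ) + 1) ≠ 0 := by positivity
  rw [Nat.add_sub_cancel]
  push_cast
  field_simp

lemma main_core {σ : Type*} (S : Finset σ) (a : σ → ℝ) (e f : σ → ℕ)
    (lam : ℂ) (u : ℂ → ℂ)
    (hu_entire : Differentiable ℂ u)
    (hode : ∀ w : ℂ, iteratedDeriv 2 u w = (Complex.I * w ^ 3 - lam) * u w)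
    (hdecay : ∀ M : ℝ, 0 < M → ∃ C₁ > (0 : ℝ), ∃ C₂ > (0 : ℝ), ∀ x y : ℝ, |y| ≤ M →
      ‖u (x + y * Complex.I)‖ + ‖deriv u (x + y * Complex.I)‖
        ≤ C₁ * Real.exp (-(|x| ^ C₂)))
    (horth : ∀ y : ℝ, ∫ x : ℝ, pw S a e f x y * hh u x y = 0) :
    ∀ y : ℝ, ∫ x : ℝ,
      (pw S (fun i => a i * (e i : ℝ) * ((e i - 1 : ℕ) : ℝ)) (fun i => e i - 1 - 1) f x y + pw S (fun i => a i * (f i : ℝ) * ((f i - 1 : ℕ) : ℝ)) e (fun i => f i - 1 - 1) x y + 12*x^2*y * pw S a e f x y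
        + 4*(x^3 - 3*x*y^2 - lam.im) * pw S (fun i => a i * (f i : ℝ) / ((e i : ℝ) + 1)) (fun i => e i + 1) (fun i => f i - 1) x y) * hh u x y = 0 := by
  -- continuity helpers
  have cP0 : ∀ y : ℝ, Continuous fun x => pw S a e f x y := fun y => pw_continuous_x S a e f y
  have cPX : ∀ y : ℝ, Continuous fun x => pw S (fun i => a i * (e i : ℝ)) (fun i => e i - 1) f x y := fun y => pw_continuous_x S _ _ _ y
  have cPXX : ∀ y : ℝ, Continuous fun x => pw S (fun i => a i * (e i : ℝ) * ((e i - 1 : ℕ) : ℝ)) (fun i => e i - 1 - 1) f x y := fun y => pw_continuous_x S _ _ _ y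
  have cPY : ∀ y : ℝ, Continuous fun x => pw S (fun i => a i * (f i : ℝ)) e (fun i => f i - 1) x y := fun y => pw_continuous_x S _ _ _ y
  have cPYY : ∀ y : ℝ, Continuous fun x => pw S (fun i => a i * (f i : ℝ) * ((f i - 1 : ℕ) : ℝ)) e (fun i => f i - 1 - 1) x y := fun y => pw_continuous_x S _ _ _ y
  have cPA : ∀ y : ℝ, Continuous fun x => pw S (fun i => a i * (f i : ℝ) / ((e i : ℝ) + 1)) (fun i => e i + 1) (fun i => f i - 1) x y := fun y => pw_continuous_x S _ _ _ y
  have cC1 : ∀ y : ℝ, Continuous fun x : ℝ => (y^3 - 3*x^2*y - lam.re) := fun y =>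
    (continuous_const.sub ((continuous_const.mul (continuous_pow 2)).mul continuous_const)).sub
      continuous_const
  have cC2 : ∀ y : ℝ, Continuous fun x : ℝ => (x^3 - 3*x*y^2 - lam.im) := fun y =>
    ((continuous_pow 3).sub ((continuous_const.mul continuous_id).mul continuous_const)).sub
      continuous_const
  have c12 : ∀ y : ℝ, Continuous fun x : ℝ => 12*x^2*y := fun y =>
    (continuous_const.mul (continuous_pow 2)).mul continuous_const
  -- polynomial bounds
  have pb0 := polyBound_pw S a e f
  have pbX := polyBound_pw S (fun i => a i * (e i : ℝ)) (fun i => e i - 1) f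
  have pbXX := polyBound_pw S (fun i => a i * (e i : ℝ) * ((e i - 1 : ℕ) : ℝ)) (fun i => e i - 1 - 1) f
  have pbY := polyBound_pw S (fun i => a i * (f i : ℝ)) e (fun i => f i - 1)
  have pbYY := polyBound_pw S (fun i => a i * (f i : ℝ) * ((f i - 1 : ℕ) : ℝ)) e (fun i => f i - 1 - 1)
  have pbA := polyBound_pw S (fun i => a i * (f i : ℝ) / ((e i : ℝ) + 1)) (fun i => e i + 1) (fun i => f i - 1)
  have pb12 : PolyBound (fun x y : ℝ => 12*x^2*y) :=
    PolyBound.congr (((PolyBound.const 12).mul (PolyBound.X.mul PolyBound.X)).mul PolyBound.Y)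
      (fun x y => by ring)
  -- integrability
  have i1 : ∀ y : ℝ, Integrable (fun x => pw S (fun i => a i * (f i : ℝ) * ((f i - 1 : ℕ) : ℝ)) e (fun i => f i - 1 - 1) x y * hh u x y) :=
    fun y => integrable_poly_hh hdecay pbYY y (cPYY y) hu_entire
  have i2 : ∀ y : ℝ, Integrable (fun x => pw S (fun i => a i * (f i : ℝ)) e (fun i => f i - 1) x y * gg u x y) :=
    fun y => integrable_poly_gg hdecay pbY y (cPY y) hu_entire hode
  have i2' : ∀ y : ℝ, Integrable (fun x => pw S a e f x y * gg u x y) :=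
    fun y => integrable_poly_gg hdecay pb0 y (cP0 y) hu_entire hode
  have i3 : ∀ y : ℝ, Integrable (fun x => (y^3 - 3*x^2*y - lam.re) * pw S a e f x y * hh u x y) :=
    fun y => integrable_poly_hh hdecay ((polyBound_cubic1 lam.re).mul pb0) y
      ((cC1 y).mul (cP0 y)) hu_entire
  have i4 : ∀ y : ℝ, Integrable (fun x => pw S a e f x y * kk u x y) :=
    fun y => integrable_poly_kk hdecay pb0 y (cP0 y) hu_entire hode
  have i5 : ∀ y : ℝ, Integrable (fun x => (x^3 - 3*x*y^2 - lam.im) * pw S (fun i => a i * (f i : ℝ) / ((e i : ℝ) + 1)) (fun i => e i + 1) (fun i => f i - 1) x y * hh u x y) :=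
    fun y => integrable_poly_hh hdecay ((polyBound_cubic2 lam.im).mul pbA) y
      ((cC2 y).mul (cPA y)) hu_entire
  have i5' : ∀ y : ℝ, Integrable (fun x => pw S (fun i => a i * (f i : ℝ) / ((e i : ℝ) + 1)) (fun i => e i + 1) (fun i => f i - 1) x y * ((x^3 - 3*x*y^2 - lam.im) * hh u x y)) := by
    intro y
    have h : (fun x => pw S (fun i => a i * (f i : ℝ) / ((e i : ℝ) + 1)) (fun i => e i + 1) (fun i => f i - 1) x y * ((x^3 - 3*x*y^2 - lam.im) * hh u x y))
        = fun x => (x^3 - 3*x*y^2 - lam.im) * pw S (fun i => a i * (f i : ℝ) / ((e i : ℝ) + 1)) (fun i => e i + 1) (fun i => f i - 1) x y * hh u x y := by funext x; ring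
    rw [h]; exact i5 y
  have i6 : ∀ y : ℝ, Integrable (fun x => pw S (fun i => a i * (e i : ℝ) * ((e i - 1 : ℕ) : ℝ)) (fun i => e i - 1 - 1) f x y * hh u x y) :=
    fun y => integrable_poly_hh hdecay pbXX y (cPXX y) hu_entire
  have i7 : ∀ y : ℝ, Integrable (fun x => pw S a e f x y * hh u x y) :=
    fun y => integrable_poly_hh hdecay pb0 y (cP0 y) hu_entire
  have i8 : ∀ y : ℝ, Integrable (fun x => 12*x^2*y * pw S a e f x y * hh u x y) :=
    fun y => integrable_poly_hh hdecay (pb12.mul pb0) y ((c12 y).mul (cP0 y)) hu_entire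
  -- Step A : differentiate F under the integral
  have stepA : ∀ y₁ : ℝ, HasDerivAt (fun y => ∫ x : ℝ, pw S a e f x y * hh u x y)
      (∫ x : ℝ, (pw S (fun i => a i * (f i : ℝ)) e (fun i => f i - 1) x y₁ * hh u x y₁ - 2 * (pw S a e f x y₁ * gg u x y₁))) y₁ := by
    intro y₁
    obtain ⟨C, hC, c, hc, hbd⟩ := decay_bounds hdecay (|y₁|+1) (by positivity)
    obtain ⟨A, N, -, hA⟩ := combo_bound
      (r₁ := pw S (fun i => a i * (f i : ℝ)) e (fun i => f i - 1)) (r₂ := fun x y => -2 * pw S a e f x y)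
      (r₃ := fun _ _ => (0:ℝ)) (r₄ := fun _ _ => (0:ℝ))
      (θ₁ := hh u) (θ₂ := gg u) (θ₃ := hh u) (θ₄ := hh u)
      pbY ((PolyBound.const (-2)).mul pb0) (PolyBound.const 0) (PolyBound.const 0)
      (|y₁|+1) C c
      (fun x y hy => (hbd x y hy).1) (fun x y hy => (hbd x y hy).2.1)
      (fun x y hy => (hbd x y hy).1) (fun x y hy => (hbd x y hy).1)
    refine (hasDerivAt_integral_of_dominated_loc_of_deriv_le (x₀ := y₁)
      (F := fun y x => pw S a e f x y * hh u x y)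
      (F' := fun y x => pw S (fun i => a i * (f i : ℝ)) e (fun i => f i - 1) x y * hh u x y - 2 * (pw S a e f x y * gg u x y))
      (bound := fun x => A * ((1+|x|)^N * Real.exp (-(|x|^c))))
      (Metric.ball_mem_nhds y₁ one_pos) ?_ ?_ ?_ ?_ ?_ ?_).2
    · exact Eventually.of_forall fun y =>
        ((cP0 y).mul (cont_hh hu_entire y)).aestronglyMeasurable
    · exact i7 y₁
    · exact (((cPY y₁).mul (cont_hh hu_entire y₁)).sub
        (continuous_const.mul ((cP0 y₁).mul (cont_gg hu_entire hode y₁)))).aestronglyMeasurable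
    · apply Eventually.of_forall
      intro x y hy
      have hyM : |y| ≤ |y₁| + 1 := by
        have h1 := Metric.mem_ball.1 hy
        rw [Real.dist_eq] at h1
        have h2 := abs_sub_abs_le_abs_sub y y₁
        linarith
      show ‖pw S (fun i => a i * (f i : ℝ)) e (fun i => f i - 1) x y * hh u x y - 2 * (pw S a e f x y * gg u x y)‖ ≤ _
      have heq : pw S (fun i => a i * (f i : ℝ)) e (fun i => f i - 1) x y * hh u x y - 2 * (pw S a e f x y * gg u x y)
          = pw S (fun i => a i * (f i : ℝ)) e (fun i => f i - 1) x y * hh u x y + (-2 * pw S a e f x y) * gg u x y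
            + (0:ℝ) * hh u x y + (0:ℝ) * hh u x y := by ring
      rw [Real.norm_eq_abs, heq]
      exact hA x y hyM
    · exact (aux_integrable c hc N).const_mul A
    · apply Eventually.of_forall
      intro x y hy
      have t := (pw_hasDerivAt_y S a e f x y).mul (hasDerivAt_hh_y hu_entire x y)
      refine t.congr_deriv ?_
      ring
  have G0 : ∀ y : ℝ, (∫ x : ℝ, (pw S (fun i => a i * (f i : ℝ)) e (fun i => f i - 1) x y * hh u x y - 2 * (pw S a e f x y * gg u x y))) = 0 := by
    intro y₁
    have hA := stepA y₁
    have hFz : (fun y => ∫ x : ℝ, pw S a e f x y * hh u x y) = fun _ => (0:ℝ) := funext horth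
    rw [hFz] at hA
    exact hA.unique (hasDerivAt_const _ _)
  -- Step B : differentiate G under the integral
  have stepB : ∀ y₁ : ℝ, HasDerivAt
      (fun y => ∫ x : ℝ, (pw S (fun i => a i * (f i : ℝ)) e (fun i => f i - 1) x y * hh u x y - 2 * (pw S a e f x y * gg u x y)))
      (∫ x : ℝ, (pw S (fun i => a i * (f i : ℝ) * ((f i - 1 : ℕ) : ℝ)) e (fun i => f i - 1 - 1) x y₁ * hh u x y₁ + pw S (fun i => a i * (f i : ℝ)) e (fun i => f i - 1) x y₁ * (-2 * gg u x y₁) - 2 * (pw S (fun i => a i * (f i : ℝ)) e (fun i => f i - 1) x y₁ * gg u x y₁ + pw S a e f x y₁ * ((y₁^3 - 3*x^2*y₁ - lam.re) * hh u x y₁ - kk u x y₁)))) y₁ := by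
    intro y₁
    obtain ⟨C, hC, c, hc, hbd⟩ := decay_bounds hdecay (|y₁|+1) (by positivity)
    obtain ⟨A, N, -, hA⟩ := combo_bound
      (r₁ := pw S (fun i => a i * (f i : ℝ) * ((f i - 1 : ℕ) : ℝ)) e (fun i => f i - 1 - 1)) (r₂ := fun x y => -4 * pw S (fun i => a i * (f i : ℝ)) e (fun i => f i - 1) x y)
      (r₃ := fun x y => -2 * (y^3 - 3*x^2*y - lam.re) * pw S a e f x y)
      (r₄ := fun x y => 2 * pw S a e f x y)
      (θ₁ := hh u) (θ₂ := gg u) (θ₃ := hh u) (θ₄ := kk u)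
      pbYY ((PolyBound.const (-4)).mul pbY)
      (((PolyBound.const (-2)).mul (polyBound_cubic1 lam.re)).mul pb0)
      ((PolyBound.const 2).mul pb0)
      (|y₁|+1) C c
      (fun x y hy => (hbd x y hy).1) (fun x y hy => (hbd x y hy).2.1)
      (fun x y hy => (hbd x y hy).1) (fun x y hy => (hbd x y hy).2.2.1)
    refine (hasDerivAt_integral_of_dominated_loc_of_deriv_le (x₀ := y₁)
      (F := fun y x => pw S (fun i => a i * (f i : ℝ)) e (fun i => f i - 1) x y * hh u x y - 2 * (pw S a e f x y * gg u x y))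
      (F' := fun y x => pw S (fun i => a i * (f i : ℝ) * ((f i - 1 : ℕ) : ℝ)) e (fun i => f i - 1 - 1) x y * hh u x y + pw S (fun i => a i * (f i : ℝ)) e (fun i => f i - 1) x y * (-2 * gg u x y) - 2 * (pw S (fun i => a i * (f i : ℝ)) e (fun i => f i - 1) x y * gg u x y + pw S a e f x y * ((y^3 - 3*x^2*y - lam.re) * hh u x y - kk u x y)))
      (bound := fun x => A * ((1+|x|)^N * Real.exp (-(|x|^c))))
      (Metric.ball_mem_nhds y₁ one_pos) ?_ ?_ ?_ ?_ ?_ ?_).2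
    · exact Eventually.of_forall fun y =>
        (((cPY y).mul (cont_hh hu_entire y)).sub
          (continuous_const.mul ((cP0 y).mul (cont_gg hu_entire hode y)))).aestronglyMeasurable
    · exact (integrable_poly_hh hdecay pbY y₁ (cPY y₁) hu_entire).sub ((i2' y₁).const_mul 2)
    · exact ((((cPYY y₁).mul (cont_hh hu_entire y₁)).add
        ((cPY y₁).mul (continuous_const.mul (cont_gg hu_entire hode y₁)))).sub
        (continuous_const.mul (((cPY y₁).mul (cont_gg hu_entire hode y₁)).add
          ((cP0 y₁).mul (((cC1 y₁).mul (cont_hh hu_entire y₁)).sub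
            (cont_kk hu_entire hode y₁)))))).aestronglyMeasurable
    · apply Eventually.of_forall
      intro x y hy
      have hyM : |y| ≤ |y₁| + 1 := by
        have h1 := Metric.mem_ball.1 hy
        rw [Real.dist_eq] at h1
        have h2 := abs_sub_abs_le_abs_sub y y₁
        linarith
      show ‖pw S (fun i => a i * (f i : ℝ) * ((f i - 1 : ℕ) : ℝ)) e (fun i => f i - 1 - 1) x y * hh u x y + pw S (fun i => a i * (f i : ℝ)) e (fun i => f i - 1) x y * (-2 * gg u x y) - 2 * (pw S (fun i => a i * (f i : ℝ)) e (fun i => f i - 1) x y * gg u x y + pw S a e f x y * ((y^3 - 3*x^2*y - lam.re) * hh u x y - kk u x y))‖ ≤ _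
      have heq : pw S (fun i => a i * (f i : ℝ) * ((f i - 1 : ℕ) : ℝ)) e (fun i => f i - 1 - 1) x y * hh u x y + pw S (fun i => a i * (f i : ℝ)) e (fun i => f i - 1) x y * (-2 * gg u x y) - 2 * (pw S (fun i => a i * (f i : ℝ)) e (fun i => f i - 1) x y * gg u x y + pw S a e f x y * ((y^3 - 3*x^2*y - lam.re) * hh u x y - kk u x y))
          = pw S (fun i => a i * (f i : ℝ) * ((f i - 1 : ℕ) : ℝ)) e (fun i => f i - 1 - 1) x y * hh u x y + (-4 * pw S (fun i => a i * (f i : ℝ)) e (fun i => f i - 1) x y) * gg u x y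
            + (-2 * (y^3 - 3*x^2*y - lam.re) * pw S a e f x y) * hh u x y
            + (2 * pw S a e f x y) * kk u x y := by ring
      rw [Real.norm_eq_abs, heq]
      exact hA x y hyM
    · exact (aux_integrable c hc N).const_mul A
    · apply Eventually.of_forall
      intro x y hy
      exact ((pw_hasDerivAt_y S (fun i => a i * (f i : ℝ)) e (fun i => f i - 1) x y).mul
          (hasDerivAt_hh_y hu_entire x y)).sub
        (((pw_hasDerivAt_y S a e f x y).mul
          (hasDerivAt_gg_y hu_entire hode x y)).const_mul 2)
  have B0 : ∀ y : ℝ, (∫ x : ℝ, (pw S (fun i => a i * (f i : ℝ) * ((f i - 1 : ℕ) : ℝ)) e (fun i => f i - 1 - 1) x y * hh u x y + pw S (fun i => a i * (f i : ℝ)) e (fun i => f i - 1) x y * (-2 * gg u x y) - 2 * (pw S (fun i => a i * (f i : ℝ)) e (fun i => f i - 1) x y * gg u x y + pw S a e f x y * ((y^3 - 3*x^2*y - lam.re) * hh u x y - kk u x y)))) = 0 := by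
    intro y₁
    have hB := stepB y₁
    have hGz : (fun y => ∫ x : ℝ, (pw S (fun i => a i * (f i : ℝ)) e (fun i => f i - 1) x y * hh u x y - 2 * (pw S a e f x y * gg u x y))) = fun _ => (0:ℝ) := funext G0
    rw [hGz] at hB
    exact hB.unique (hasDerivAt_const _ _)
  -- Integration by parts (a)
  have ibpA : ∀ y : ℝ, ∫ x : ℝ,
      (pw S (fun i => a i * (f i : ℝ)) e (fun i => f i - 1) x y * gg u x y + pw S (fun i => a i * (f i : ℝ) / ((e i : ℝ) + 1)) (fun i => e i + 1) (fun i => f i - 1) x y * ((x^3 - 3*x*y^2 - lam.im) * hh u x y)) = 0 := by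
    intro y
    exact integral_deriv_eq_zero (fun x => pw S (fun i => a i * (f i : ℝ) / ((e i : ℝ) + 1)) (fun i => e i + 1) (fun i => f i - 1) x y * gg u x y)
      (fun x => pw S (fun i => a i * (f i : ℝ)) e (fun i => f i - 1) x y * gg u x y + pw S (fun i => a i * (f i : ℝ) / ((e i : ℝ) + 1)) (fun i => e i + 1) (fun i => f i - 1) x y * ((x^3 - 3*x*y^2 - lam.im) * hh u x y))
      (fun x => (pw_hasDerivAt_antideriv S (fun i => a i * (f i : ℝ)) e (fun i => f i - 1) x y).mul
        (hasDerivAt_gg_x hu_entire hode x y))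
      ((i2 y).add (i5' y))
      (tendsto_poly_gg hdecay pbA y).1 (tendsto_poly_gg hdecay pbA y).2
  -- Integration by parts (b)
  have ibpB : ∀ y : ℝ, ∫ x : ℝ,
      ((pw S (fun i => a i * (e i : ℝ)) (fun i => e i - 1) f x y * hx u x y + pw S a e f x y * (2*(y^3 - 3*x^2*y - lam.re) * hh u x y + 2 * kk u x y))
        - (pw S (fun i => a i * (e i : ℝ) * ((e i - 1 : ℕ) : ℝ)) (fun i => e i - 1 - 1) f x y * hh u x y + pw S (fun i => a i * (e i : ℝ)) (fun i => e i - 1) f x y * hx u x y)) = 0 := by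
    intro y
    refine integral_deriv_eq_zero
      (fun x => pw S a e f x y * hx u x y - pw S (fun i => a i * (e i : ℝ)) (fun i => e i - 1) f x y * hh u x y)
      (fun x => (pw S (fun i => a i * (e i : ℝ)) (fun i => e i - 1) f x y * hx u x y + pw S a e f x y * (2*(y^3 - 3*x^2*y - lam.re) * hh u x y + 2 * kk u x y))
        - (pw S (fun i => a i * (e i : ℝ) * ((e i - 1 : ℕ) : ℝ)) (fun i => e i - 1 - 1) f x y * hh u x y + pw S (fun i => a i * (e i : ℝ)) (fun i => e i - 1) f x y * hx u x y))
      (fun x => ((pw_hasDerivAt_x S a e f x y).mul (hasDerivAt_hx_x hu_entire hode x y)).sub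
        ((pw_hasDerivAt_x S (fun i => a i * (e i : ℝ)) (fun i => e i - 1) f x y).mul
          (hasDerivAt_hh_x hu_entire x y)))
      ?_ ?_ ?_
    · have hre : (fun x => (pw S (fun i => a i * (e i : ℝ)) (fun i => e i - 1) f x y * hx u x y
          + pw S a e f x y * (2*(y^3 - 3*x^2*y - lam.re) * hh u x y + 2 * kk u x y))
          - (pw S (fun i => a i * (e i : ℝ) * ((e i - 1 : ℕ) : ℝ)) (fun i => e i - 1 - 1) f x y * hh u x y + pw S (fun i => a i * (e i : ℝ)) (fun i => e i - 1) f x y * hx u x y))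
          = fun x => 2 * ((y^3 - 3*x^2*y - lam.re) * pw S a e f x y * hh u x y)
            + 2 * (pw S a e f x y * kk u x y) - pw S (fun i => a i * (e i : ℝ) * ((e i - 1 : ℕ) : ℝ)) (fun i => e i - 1 - 1) f x y * hh u x y := by funext x; ring
      rw [hre]
      exact (((i3 y).const_mul 2).add ((i4 y).const_mul 2)).sub (i6 y)
    · have t1 := (tendsto_poly_hx hdecay pb0 y).1
      have t2 := (tendsto_poly_hh hdecay pbX y).1
      simpa using t1.sub t2
    · have t1 := (tendsto_poly_hx hdecay pb0 y).2
      have t2 := (tendsto_poly_hh hdecay pbX y).2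
      simpa using t1.sub t2
  -- Final assembly
  intro y
  have eq1 := B0 y
  have hsplit1 : (fun x => pw S (fun i => a i * (f i : ℝ) * ((f i - 1 : ℕ) : ℝ)) e (fun i => f i - 1 - 1) x y * hh u x y + pw S (fun i => a i * (f i : ℝ)) e (fun i => f i - 1) x y * (-2 * gg u x y) - 2 * (pw S (fun i => a i * (f i : ℝ)) e (fun i => f i - 1) x y * gg u x y + pw S a e f x y * ((y^3 - 3*x^2*y - lam.re) * hh u x y - kk u x y)))
      = fun x => pw S (fun i => a i * (f i : ℝ) * ((f i - 1 : ℕ) : ℝ)) e (fun i => f i - 1 - 1) x y * hh u x y - (4 * (pw S (fun i => a i * (f i : ℝ)) e (fun i => f i - 1) x y * gg u x y)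
        + (2 * ((y^3 - 3*x^2*y - lam.re) * pw S a e f x y * hh u x y) - 2 * (pw S a e f x y * kk u x y))) := by
    funext x; ring
  have iS2 : Integrable (fun x => 2 * ((y^3 - 3*x^2*y - lam.re) * pw S a e f x y * hh u x y)
      - 2 * (pw S a e f x y * kk u x y)) := ((i3 y).const_mul 2).sub ((i4 y).const_mul 2)
  have iS1 : Integrable (fun x => 4 * (pw S (fun i => a i * (f i : ℝ)) e (fun i => f i - 1) x y * gg u x y)
      + (2 * ((y^3 - 3*x^2*y - lam.re) * pw S a e f x y * hh u x y) - 2 * (pw S a e f x y * kk u x y))) :=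
    ((i2 y).const_mul 4).add iS2
  rw [hsplit1, integral_sub (i1 y) iS1,
    integral_add ((i2 y).const_mul 4) iS2,
    integral_sub ((i3 y).const_mul 2) ((i4 y).const_mul 2),
    integral_const_mul, integral_const_mul, integral_const_mul] at eq1
  have eq2 := ibpA y
  rw [integral_add (i2 y) (i5' y),
    show (fun x => pw S (fun i => a i * (f i : ℝ) / ((e i : ℝ) + 1)) (fun i => e i + 1) (fun i => f i - 1) x y * ((x^3 - 3*x*y^2 - lam.im) * hh u x y))
      = fun x => (x^3 - 3*x*y^2 - lam.im) * pw S (fun i => a i * (f i : ℝ) / ((e i : ℝ) + 1)) (fun i => e i + 1) (fun i => f i - 1) x y * hh u x y from funext fun x => by ring] at eq2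
  have eq3 := ibpB y
  have hsplit3 : (fun x => (pw S (fun i => a i * (e i : ℝ)) (fun i => e i - 1) f x y * hx u x y
      + pw S a e f x y * (2*(y^3 - 3*x^2*y - lam.re) * hh u x y + 2 * kk u x y))
      - (pw S (fun i => a i * (e i : ℝ) * ((e i - 1 : ℕ) : ℝ)) (fun i => e i - 1 - 1) f x y * hh u x y + pw S (fun i => a i * (e i : ℝ)) (fun i => e i - 1) f x y * hx u x y))
      = fun x => (2 * ((y^3 - 3*x^2*y - lam.re) * pw S a e f x y * hh u x y)
        + 2 * (pw S a e f x y * kk u x y)) - pw S (fun i => a i * (e i : ℝ) * ((e i - 1 : ℕ) : ℝ)) (fun i => e i - 1 - 1) f x y * hh u x y := by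
    funext x; ring
  have iS3 : Integrable (fun x => 2 * ((y^3 - 3*x^2*y - lam.re) * pw S a e f x y * hh u x y)
      + 2 * (pw S a e f x y * kk u x y)) := ((i3 y).const_mul 2).add ((i4 y).const_mul 2)
  rw [hsplit3, integral_sub iS3 (i6 y),
    integral_add ((i3 y).const_mul 2) ((i4 y).const_mul 2),
    integral_const_mul, integral_const_mul] at eq3
  have eq4 : (4:ℝ) * (∫ x : ℝ, (y^3 - 3*x^2*y - lam.re) * pw S a e f x y * hh u x y)
      + (∫ x : ℝ, 12*x^2*y * pw S a e f x y * hh u x y) = 0 := by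
    have h48 : (fun x : ℝ => 4*((y^3 - 3*x^2*y - lam.re) * pw S a e f x y * hh u x y)
        + 12*x^2*y * pw S a e f x y * hh u x y)
        = fun x => (4*y^3 - 4*lam.re) * (pw S a e f x y * hh u x y) := by
      funext x; ring
    have hsum : ∫ x : ℝ, (4*((y^3 - 3*x^2*y - lam.re) * pw S a e f x y * hh u x y)
        + 12*x^2*y * pw S a e f x y * hh u x y)
        = (4:ℝ) * (∫ x : ℝ, (y^3 - 3*x^2*y - lam.re) * pw S a e f x y * hh u x y)
          + (∫ x : ℝ, 12*x^2*y * pw S a e f x y * hh u x y) := by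
      rw [integral_add ((i3 y).const_mul 4) (i8 y), integral_const_mul]
    rw [← hsum, h48, integral_const_mul, horth y, mul_zero]
  have iT2 : Integrable (fun x => pw S (fun i => a i * (e i : ℝ) * ((e i - 1 : ℕ) : ℝ)) (fun i => e i - 1 - 1) f x y * hh u x y + pw S (fun i => a i * (f i : ℝ) * ((f i - 1 : ℕ) : ℝ)) e (fun i => f i - 1 - 1) x y * hh u x y) :=
    (i6 y).add (i1 y)
  have iT1 : Integrable (fun x => pw S (fun i => a i * (e i : ℝ) * ((e i - 1 : ℕ) : ℝ)) (fun i => e i - 1 - 1) f x y * hh u x y + pw S (fun i => a i * (f i : ℝ) * ((f i - 1 : ℕ) : ℝ)) e (fun i => f i - 1 - 1) x y * hh u x y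
      + 12*x^2*y * pw S a e f x y * hh u x y) := iT2.add (i8 y)
  rw [show (fun x => (pw S (fun i => a i * (e i : ℝ) * ((e i - 1 : ℕ) : ℝ)) (fun i => e i - 1 - 1) f x y + pw S (fun i => a i * (f i : ℝ) * ((f i - 1 : ℕ) : ℝ)) e (fun i => f i - 1 - 1) x y + 12*x^2*y * pw S a e f x y
      + 4*(x^3 - 3*x*y^2 - lam.im) * pw S (fun i => a i * (f i : ℝ) / ((e i : ℝ) + 1)) (fun i => e i + 1) (fun i => f i - 1) x y) * hh u x y)
      = fun x => pw S (fun i => a i * (e i : ℝ) * ((e i - 1 : ℕ) : ℝ)) (fun i => e i - 1 - 1) f x y * hh u x y + pw S (fun i => a i * (f i : ℝ) * ((f i - 1 : ℕ) : ℝ)) e (fun i => f i - 1 - 1) x y * hh u x y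
        + 12*x^2*y * pw S a e f x y * hh u x y
        + 4 * ((x^3 - 3*x*y^2 - lam.im) * pw S (fun i => a i * (f i : ℝ) / ((e i : ℝ) + 1)) (fun i => e i + 1) (fun i => f i - 1) x y * hh u x y) from funext fun x => by ring,
    integral_add iT1 ((i5 y).const_mul 4),
    integral_add iT2 (i8 y),
    integral_add (i6 y) (i1 y), integral_const_mul]
  linarith [eq1, eq2, eq3, eq4]

/-- Let `u` be an eigenfunction of the cubic PT-symmetric oscillator
`-u'' - (iz)³u = lam·u` with eigenvalue `lam = α + iβ`.  If `p(x,y)` is a polynomial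
in two real variables with `∫_ℝ p(x,y)·|u(x+iy)|² dx = 0` for every `y`, then the
polynomial
`q(x,y) = ∂²p/∂x² + ∂²p/∂y² + 12x²y·p(x,y) + 4(x³ - 3xy² - β)·∫₀ˣ (∂p/∂y)(t,y) dt`
also satisfies `∫_ℝ q(x,y)·|u(x+iy)|² dx = 0` for every `y`. -/
theorem orthogonality_closed_under_laplacian_operation
    (lam : ℂ) (u : ℂ → ℂ)
    (hu_entire : Differentiable ℂ u)
    (hu_ne : u ≠ 0)
    (hode : ∀ w : ℂ, iteratedDeriv 2 u w = (Complex.I * w ^ 3 - lam) * u w)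
    (hdecay : ∀ M : ℝ, 0 < M → ∃ C₁ > (0 : ℝ), ∃ C₂ > (0 : ℝ), ∀ x y : ℝ, |y| ≤ M →
      ‖u (x + y * Complex.I)‖ + ‖deriv u (x + y * Complex.I)‖
        ≤ C₁ * Real.exp (-(|x| ^ C₂)))
    (p : ℝ → ℝ → ℝ)
    (hp : ∃ P : MvPolynomial (Fin 2) ℝ, ∀ x y : ℝ,
      p x y = MvPolynomial.eval ![x, y] P)
    (horth : ∀ y : ℝ,
      ∫ x : ℝ, p x y * ‖u (x + y * Complex.I)‖ ^ 2 = 0) :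
    ∀ y : ℝ,
      ∫ x : ℝ,
        (deriv (deriv (fun s : ℝ => p s y)) x
          + deriv (deriv (fun s : ℝ => p x s)) y
          + 12 * x ^ 2 * y * p x y
          + 4 * (x ^ 3 - 3 * x * y ^ 2 - lam.im)
            * ∫ t in (0 : ℝ)..x, deriv (fun s : ℝ => p t s) y)
        * ‖u (x + y * Complex.I)‖ ^ 2 = 0 := by
  obtain ⟨P, hP⟩ := hp
  have hpeq : ∀ x y : ℝ, p x y = pw P.support (fun d => MvPolynomial.coeff d P) (fun d : Fin 2 →₀ ℕ => d 0) (fun d : Fin 2 →₀ ℕ => d 1) x y := by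
    intro x y
    rw [hP x y, MvPolynomial.eval_eq']
    simp only [pw]
    apply Finset.sum_congr rfl
    intro d _
    rw [Fin.prod_univ_two]
    simp only [Matrix.cons_val_zero, Matrix.cons_val_one, Matrix.head_cons]
    ring
  have horth' : ∀ y : ℝ, ∫ x : ℝ, pw P.support (fun d => MvPolynomial.coeff d P) (fun d : Fin 2 →₀ ℕ => d 0) (fun d : Fin 2 →₀ ℕ => d 1) x y * hh u x y = 0 := by
    intro y
    have h := horth y
    rw [show (fun x : ℝ => p x y * ‖u (x + y * Complex.I)‖ ^ 2)
        = fun x : ℝ => pw P.support (fun d => MvPolynomial.coeff d P) (fun d : Fin 2 →₀ ℕ => d 0) (fun d : Fin 2 →₀ ℕ => d 1) x y * hh u x y from funext fun x => by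
      rw [hpeq x y, Complex.sq_norm]; rfl] at h
    exact h
  have key := main_core P.support (fun d => MvPolynomial.coeff d P) (fun d : Fin 2 →₀ ℕ => d 0) (fun d : Fin 2 →₀ ℕ => d 1) lam u hu_entire hode hdecay horth'
  intro y
  have hdx1 : deriv (fun s : ℝ => p s y) = fun t => pw P.support (fun d => MvPolynomial.coeff d P * (d 0 : ℝ)) (fun d : Fin 2 →₀ ℕ => d 0 - 1) (fun d : Fin 2 →₀ ℕ => d 1) t y := by
    funext t
    have h1 : (fun s : ℝ => p s y) = fun s => pw P.support (fun d => MvPolynomial.coeff d P) (fun d : Fin 2 →₀ ℕ => d 0) (fun d : Fin 2 →₀ ℕ => d 1) s y := funext fun s => hpeq s y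
    rw [h1]
    exact (pw_hasDerivAt_x P.support (fun d => MvPolynomial.coeff d P) (fun d : Fin 2 →₀ ℕ => d 0) (fun d : Fin 2 →₀ ℕ => d 1) t y).deriv
  have g1 : ∀ x : ℝ, deriv (deriv (fun s : ℝ => p s y)) x = pw P.support (fun d => MvPolynomial.coeff d P * (d 0 : ℝ) * ((d 0 - 1 : ℕ) : ℝ)) (fun d : Fin 2 →₀ ℕ => d 0 - 1 - 1) (fun d : Fin 2 →₀ ℕ => d 1) x y := by
    intro x
    rw [hdx1]
    exact (pw_hasDerivAt_x P.support (fun d => MvPolynomial.coeff d P * (d 0 : ℝ))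
      (fun d : Fin 2 →₀ ℕ => d 0 - 1) (fun d : Fin 2 →₀ ℕ => d 1) x y).deriv
  have hdy1 : ∀ x : ℝ, deriv (fun s : ℝ => p x s) = fun s => pw P.support (fun d => MvPolynomial.coeff d P * (d 1 : ℝ)) (fun d : Fin 2 →₀ ℕ => d 0) (fun d : Fin 2 →₀ ℕ => d 1 - 1) x s := by
    intro x
    funext s
    have h1 : (fun s : ℝ => p x s) = fun s => pw P.support (fun d => MvPolynomial.coeff d P) (fun d : Fin 2 →₀ ℕ => d 0) (fun d : Fin 2 →₀ ℕ => d 1) x s := funext fun s => hpeq x s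
    rw [h1]
    exact (pw_hasDerivAt_y P.support (fun d => MvPolynomial.coeff d P) (fun d : Fin 2 →₀ ℕ => d 0) (fun d : Fin 2 →₀ ℕ => d 1) x s).deriv
  have g2 : ∀ x : ℝ, deriv (deriv (fun s : ℝ => p x s)) y = pw P.support (fun d => MvPolynomial.coeff d P * (d 1 : ℝ) * ((d 1 - 1 : ℕ) : ℝ)) (fun d : Fin 2 →₀ ℕ => d 0) (fun d : Fin 2 →₀ ℕ => d 1 - 1 - 1) x y := by
    intro x
    rw [hdy1 x]
    exact (pw_hasDerivAt_y P.support (fun d => MvPolynomial.coeff d P * (d 1 : ℝ))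
      (fun d : Fin 2 →₀ ℕ => d 0) (fun d : Fin 2 →₀ ℕ => d 1 - 1) x y).deriv
  have g3 : ∀ x : ℝ, (∫ t in (0:ℝ)..x, deriv (fun s : ℝ => p t s) y) = pw P.support (fun d => MvPolynomial.coeff d P * (d 1 : ℝ) / ((d 0 : ℝ) + 1)) (fun d : Fin 2 →₀ ℕ => d 0 + 1) (fun d : Fin 2 →₀ ℕ => d 1 - 1) x y := by
    intro x
    rw [show (fun t : ℝ => deriv (fun s : ℝ => p t s) y) = fun t => pw P.support (fun d => MvPolynomial.coeff d P * (d 1 : ℝ)) (fun d : Fin 2 →₀ ℕ => d 0) (fun d : Fin 2 →₀ ℕ => d 1 - 1) t y from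
      funext fun t => by rw [hdy1 t]]
    exact pw_integral P.support (fun d => MvPolynomial.coeff d P * (d 1 : ℝ))
      (fun d : Fin 2 →₀ ℕ => d 0) (fun d : Fin 2 →₀ ℕ => d 1 - 1) x y
  rw [show (fun x : ℝ =>
        (deriv (deriv (fun s : ℝ => p s y)) x
          + deriv (deriv (fun s : ℝ => p x s)) y
          + 12 * x ^ 2 * y * p x y
          + 4 * (x ^ 3 - 3 * x * y ^ 2 - lam.im)
            * ∫ t in (0 : ℝ)..x, deriv (fun s : ℝ => p t s) y)
        * ‖u (x + y * Complex.I)‖ ^ 2)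
      = fun x : ℝ => (pw P.support (fun d => MvPolynomial.coeff d P * (d 0 : ℝ) * ((d 0 - 1 : ℕ) : ℝ)) (fun d : Fin 2 →₀ ℕ => d 0 - 1 - 1) (fun d : Fin 2 →₀ ℕ => d 1) x y + pw P.support (fun d => MvPolynomial.coeff d P * (d 1 : ℝ) * ((d 1 - 1 : ℕ) : ℝ)) (fun d : Fin 2 →₀ ℕ => d 0) (fun d : Fin 2 →₀ ℕ => d 1 - 1 - 1) x y + 12*x^2*y * pw P.support (fun d => MvPolynomial.coeff d P) (fun d : Fin 2 →₀ ℕ => d 0) (fun d : Fin 2 →₀ ℕ => d 1) x y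
        + 4*(x^3 - 3*x*y^2 - lam.im) * pw P.support (fun d => MvPolynomial.coeff d P * (d 1 : ℝ) / ((d 0 : ℝ) + 1)) (fun d : Fin 2 →₀ ℕ => d 0 + 1) (fun d : Fin 2 →₀ ℕ => d 1 - 1) x y) * hh u x y from funext fun x => by
    rw [g1 x, g2 x, g3 x, hpeq x y, Complex.sq_norm]; rfl]
  exact key y
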